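/- Let d,n∈ℕ⁺ with n≥2, K∈ℕ⁺, 𝐦∈{1,…,K}^d, and let α∈ℕ^d be a multi-index with |α| ≤ n−1. Then the function x ↦ x^α·s_𝐦(x) on ℝ^d is exactly realized by a σ₂-NN with depth 3+log₂d−1+log₂n−1 (logarithms rounded up) and width 4n−4+6d. -/

import Mathlib

open scoped BigOperators
open MeasureTheory

noncomputable section




/-- squared ReLU, the activation `σ₂` -/
def sig2 (x : ℝ) : ℝ := (max 0 x) ^ 2

/-- activation choice: `t = 0` gives `σ₁` (ReLU), `t = 1` gives `σ₂` (squared ReLU) -/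
def sigAct (t : Fin 2) (x : ℝ) : ℝ := (max 0 x) ^ ((t : ℕ) + 1)

/-- A feedforward neural network with input dimension `m` and scalar output, in which every
hidden layer applies an affine map followed coordinatewise by one of the activations σ₁, σ₂. -/
inductive Net : ℕ → Type where
  | out : {m : ℕ} → (Fin m → ℝ) → ℝ → Net m
  | layer : {m n : ℕ} → Fin 2 → (Fin n → Fin m → ℝ) → (Fin n → ℝ) → Net n → Net m

namespace Net

/-- evaluation of a network -/
def eval : {m : ℕ} → Net m → (Fin m → ℝ) → ℝ
  | _, .out w b, x => (∑ j, w j * x j) + b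
  | _, .layer t W b rest, x => eval rest fun i => sigAct t ((∑ j, W i j * x j) + b i)

/-- number of hidden layers -/
def depth : {m : ℕ} → Net m → ℕ
  | _, .out _ _ => 0
  | _, .layer _ _ _ rest => depth rest + 1

/-- every hidden layer has at most `W` neurons -/
def widthLe : {m : ℕ} → Net m → ℕ → Prop
  | _, .out _ _, _ => True
  | _, @Net.layer _ n _ _ _ rest, W => n ≤ W ∧ widthLe rest W

/-- total number of parameters (entries of weight matrices and bias vectors) -/
def params : {m : ℕ} → Net m → ℕ
  | m, .out _ _ => m + 1
  | m, @Net.layer _ n _ _ _ rest => n * m + n + params rest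

/-- the network only uses the ReLU activation σ₁ -/
def isReLU : {m : ℕ} → Net m → Prop
  | _, .out _ _ => True
  | _, .layer t _ _ rest => t = 0 ∧ isReLU rest

end Net



/-- the piecewise-quadratic cutoff function `s` -/
def sFun (x : ℝ) : ℝ :=
  if x < 0 then 0
  else if x ≤ 1 / 2 then 2 * x ^ 2
  else if x ≤ 1 then -2 * (x - 1) ^ 2 + 1
  else if x ≤ 5 then 1
  else if x ≤ 11 / 2 then -2 * (x - 5) ^ 2 + 1
  else if x ≤ 6 then 2 * (x - 6) ^ 2
  else 0

/-- `s_m(x) = s(4Kx + 5 - 4m)` -/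
def smOne (K m : ℕ) (x : ℝ) : ℝ := sFun (4 * K * x + 5 - 4 * m)

/-- `s_𝐦(x) = ∏_j s_{m_j}(x_j)`, the partition-of-unity factor -/
def smProd (d K : ℕ) (mv : Fin d → ℕ) (x : Fin d → ℝ) : ℝ := ∏ j, smOne K (mv j) (x j)

/-! ### auxiliary lemmas for the construction -/

lemma sigAct_one (x : ℝ) : sigAct 1 x = sig2 x := rfl
lemma sig2_of_nonpos (x : ℝ) (h : x ≤ 0) : sig2 x = 0 := by simp [sig2, max_eq_left h]
lemma sig2_of_nonneg (x : ℝ) (h : 0 ≤ x) : sig2 x = x ^ 2 := by simp [sig2, max_eq_right h]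
lemma sig2_add_neg (x : ℝ) : sig2 x + sig2 (-x) = x ^ 2 := by
  rcases le_total x 0 with h | h
  · rw [sig2_of_nonpos x h, sig2_of_nonneg (-x) (by linarith)]; ring
  · rw [sig2_of_nonneg x h, sig2_of_nonpos (-x) (by linarith)]; ring

def affComp : {k p : ℕ} → Net k → (Fin k → Fin p → ℝ) → (Fin k → ℝ) → Net p
  | _, _, .out w b, C, c => .out (fun j => ∑ i, w i * C i j) ((∑ i, w i * c i) + b)
  | _, _, .layer t W b rest, C, c =>
      .layer t (fun i j => ∑ l, W i l * C l j) (fun i => (∑ l, W i l * c l) + b i) rest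

lemma aff_sum {k p : ℕ} (w : Fin k → ℝ) (C : Fin k → Fin p → ℝ) (c : Fin k → ℝ) (z : Fin p → ℝ) :
    (∑ j, (∑ i, w i * C i j) * z j) + ((∑ i, w i * c i)) =
      ∑ i, w i * ((∑ j, C i j * z j) + c i) := by
  simp_rw [Finset.sum_mul, mul_add, Finset.sum_add_distrib, Finset.mul_sum, mul_assoc]
  rw [Finset.sum_comm]

lemma affComp_eval {k p : ℕ} (φ : Net k) (C : Fin k → Fin p → ℝ) (c : Fin k → ℝ)
    (z : Fin p → ℝ) :
    (affComp φ C c).eval z = φ.eval (fun i => (∑ j, C i j * z j) + c i) := by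
  cases φ with
  | out w b => simp only [affComp, Net.eval, ← aff_sum w C c z]; ring
  | layer t W b rest =>
      simp only [affComp, Net.eval]
      congr 1; funext i; congr 1
      rw [← add_assoc, aff_sum (W i) C c z]

lemma affComp_depth {k p : ℕ} (φ : Net k) (C : Fin k → Fin p → ℝ) (c : Fin k → ℝ) :
    (affComp φ C c).depth = φ.depth := by cases φ <;> rfl

lemma affComp_widthLe {k p W : ℕ} (φ : Net k) (C : Fin k → Fin p → ℝ) (c : Fin k → ℝ)
    (h : φ.widthLe W) : (affComp φ C c).widthLe W := by cases φ <;> exact h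

lemma widthLe_mono : ∀ {m : ℕ} (φ : Net m) {W W' : ℕ}, φ.widthLe W → W ≤ W' → φ.widthLe W'
  | _, .out _ _, _, _, _, _ => trivial
  | _, .layer _ _ _ rest, _, _, h, hW => ⟨le_trans h.1 hW, widthLe_mono rest h.2 hW⟩

/-! #### the product gadget and the binary product tree -/

def cafP : Fin 6 → ℝ := ![1, -1, 1, -1, 0, 0]
def cbfP : Fin 6 → ℝ := ![1, -1, 0, 0, 1, -1]
def cpfP : Fin 6 → ℝ := ![1/2, 1/2, -1/2, -1/2, -1/2, -1/2]

lemma pair_gadget (a b : ℝ) :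
    (∑ r : Fin 6, cpfP r * sig2 (cafP r * a + cbfP r * b)) = a * b := by
  rw [Fin.sum_univ_six,
    show cpfP 0 = 1/2 from rfl, show cpfP 1 = 1/2 from rfl, show cpfP 2 = -1/2 from rfl,
    show cpfP 3 = -1/2 from rfl, show cpfP 4 = -1/2 from rfl, show cpfP 5 = -1/2 from rfl,
    show cafP 0 = 1 from rfl, show cafP 1 = -1 from rfl, show cafP 2 = 1 from rfl,
    show cafP 3 = -1 from rfl, show cafP 4 = 0 from rfl, show cafP 5 = 0 from rfl,
    show cbfP 0 = 1 from rfl, show cbfP 1 = -1 from rfl, show cbfP 2 = 0 from rfl,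
    show cbfP 3 = 0 from rfl, show cbfP 4 = 1 from rfl, show cbfP 5 = -1 from rfl]
  rw [show (1:ℝ)*a + 1*b = a+b by ring, show (-1:ℝ)*a + -1*b = -(a+b) by ring,
    show (1:ℝ)*a + 0*b = a by ring, show (-1:ℝ)*a + 0*b = -a by ring,
    show (0:ℝ)*a + 1*b = b by ring, show (0:ℝ)*a + -1*b = -b by ring]
  have h1 := sig2_add_neg (a+b); have h2 := sig2_add_neg a; have h3 := sig2_add_neg b
  linear_combination (1/2) * h1 - (1/2) * h2 - (1/2) * h3

lemma sum_ind {N : ℕ} (c : ℕ) (v : ℝ) (y : Fin N → ℝ) :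
    (∑ k : Fin N, (if (k : ℕ) = c then v else 0) * y k)
      = if h : c < N then v * y ⟨c, h⟩ else 0 := by
  split_ifs with h
  · rw [Finset.sum_eq_single (⟨c, h⟩ : Fin N)]
    · simp
    · intro k _ hk
      have hne : (k : ℕ) ≠ c := fun hc => hk (Fin.ext hc)
      simp [hne]
    · intro h'; exact absurd (Finset.mem_univ _) h'
  · refine Finset.sum_eq_zero fun k _ => ?_
    have hk := k.2
    have hne : (k : ℕ) ≠ c := by omega
    simp [hne]

def padFn {N : ℕ} (y : Fin N → ℝ) (c : ℕ) : ℝ := if h : c < N then y ⟨c, h⟩ else 1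

lemma prod_pairs {M N : ℕ} (h2M : N ≤ M*2) (y : Fin N → ℝ) :
    (∏ q : Fin M, padFn y (2*(q:ℕ)) * padFn y (2*(q:ℕ)+1)) = ∏ k, y k := by
  have stepF : (∏ q : Fin M, padFn y (2*(q:ℕ)) * padFn y (2*(q:ℕ)+1))
      = ∏ p : Fin M × Fin 2, padFn y ((p.2 : ℕ) + 2 * (p.1 : ℕ)) := by
    rw [Fintype.prod_prod_type]
    refine Finset.prod_congr rfl fun q _ => ?_
    rw [Fin.prod_univ_two]
    norm_num [Nat.add_comm]
  have stepD : (∏ p : Fin M × Fin 2, padFn y ((p.2 : ℕ) + 2 * (p.1 : ℕ)))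
      = ∏ j : Fin (M*2), padFn y (j : ℕ) := by
    rw [← Equiv.prod_comp finProdFinEquiv (fun j : Fin (M*2) => padFn y (j : ℕ))]
    exact Finset.prod_congr rfl fun p _ => by simp
  have stepB : (∏ c ∈ Finset.range N, padFn y c) = ∏ c ∈ Finset.range (M*2), padFn y c := by
    refine Finset.prod_subset (Finset.range_subset_range.2 h2M) fun c _ hc => ?_
    simp only [Finset.mem_range, not_lt] at hc
    have : ¬ c < N := by omega
    simp [padFn, this]
  have stepA : (∏ k : Fin N, y k) = ∏ c ∈ Finset.range N, padFn y c := by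
    rw [← Fin.prod_univ_eq_prod_range (fun c => padFn y c) N]
    refine Finset.prod_congr rfl fun k _ => ?_
    simp [padFn, k.2]
  rw [stepF, stepD, Fin.prod_univ_eq_prod_range (fun c => padFn y c) (M*2), ← stepB, ← stepA]

def pairW (M N : ℕ) : Fin (M*6) → Fin N → ℝ := fun j k =>
  (if (k:ℕ) = 2*((finProdFinEquiv.symm j).1:ℕ) then cafP (finProdFinEquiv.symm j).2 else 0)
  + (if (k:ℕ) = 2*((finProdFinEquiv.symm j).1:ℕ)+1 then cbfP (finProdFinEquiv.symm j).2 else 0)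
def pairB (M N : ℕ) : Fin (M*6) → ℝ := fun j =>
  if 2*((finProdFinEquiv.symm j).1:ℕ)+1 < N then 0 else cbfP (finProdFinEquiv.symm j).2
def pairC (M : ℕ) : Fin M → Fin (M*6) → ℝ := fun q j =>
  if (finProdFinEquiv.symm j).1 = q then cpfP (finProdFinEquiv.symm j).2 else 0

lemma pair_recover {M N : ℕ} (h2M1 : M*2 ≤ N+1) (y : Fin N → ℝ) (q : Fin M) :
    (∑ j : Fin (M*6), pairC M q j * sigAct 1 ((∑ k, pairW M N j k * y k) + pairB M N j))
      = padFn y (2*(q:ℕ)) * padFn y (2*(q:ℕ)+1) := by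
  have harg : ∀ (q' : Fin M) (r : Fin 6),
      (∑ k, pairW M N (finProdFinEquiv (q', r)) k * y k) + pairB M N (finProdFinEquiv (q', r))
        = cafP r * padFn y (2*(q':ℕ)) + cbfP r * padFn y (2*(q':ℕ)+1) := by
    intro q' r
    have hq' : 2*(q':ℕ) < N := by have := q'.2; omega
    simp only [pairW, pairB, Equiv.symm_apply_apply]
    simp_rw [add_mul, Finset.sum_add_distrib, sum_ind]
    rw [dif_pos hq']
    by_cases h : 2*(q':ℕ)+1 < N
    · rw [dif_pos h, if_pos h]
      simp only [padFn, dif_pos hq', dif_pos h]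
      ring
    · rw [dif_neg h, if_neg h]
      simp only [padFn, dif_pos hq', dif_neg h]
      ring
  rw [← Equiv.sum_comp finProdFinEquiv
    (fun j : Fin (M*6) => pairC M q j * sigAct 1 ((∑ k, pairW M N j k * y k) + pairB M N j))]
  rw [Fintype.sum_prod_type]
  rw [Finset.sum_eq_single q]
  · have hterm : ∀ r : Fin 6,
        pairC M q (finProdFinEquiv (q, r))
          * sigAct 1 ((∑ k, pairW M N (finProdFinEquiv (q, r)) k * y k)
              + pairB M N (finProdFinEquiv (q, r)))
        = cpfP r * sig2 (cafP r * padFn y (2*(q:ℕ)) + cbfP r * padFn y (2*(q:ℕ)+1)) := by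
      intro r
      rw [harg q r, sigAct_one]
      congr 1
      simp [pairC, Equiv.symm_apply_apply]
    rw [Finset.sum_congr rfl fun r _ => hterm r, pair_gadget]
  · intro q' _ hne
    refine Finset.sum_eq_zero fun r _ => ?_
    simp [pairC, Equiv.symm_apply_apply, hne]
  · intro h'; exact absurd (Finset.mem_univ _) h'

lemma prod_net (N : ℕ) : 1 ≤ N → ∃ φ : Net N, φ.widthLe (3*N+4) ∧ φ.depth ≤ Nat.clog 2 N ∧
    ∀ y : Fin N → ℝ, φ.eval y = ∏ k, y k := by
  induction N using Nat.strong_induction_on with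
  | _ N IH =>
    intro hN
    by_cases hN2 : N < 2
    · have : N = 1 := by omega
      subst this
      exact ⟨.out (fun _ => 1) 0, trivial, by simp [Net.depth], fun y => by simp [Net.eval]⟩
    · push_neg at hN2
      obtain ⟨ψ, hw, hdep, hev⟩ := IH ((N+1)/2) (by omega) (by omega)
      refine ⟨Net.layer 1 (pairW ((N+1)/2) N) (pairB ((N+1)/2) N)
          (affComp ψ (pairC ((N+1)/2)) (fun _ => 0)),
        ⟨by omega, affComp_widthLe _ _ _ (widthLe_mono ψ hw (by omega))⟩, ?_, ?_⟩
      · show (affComp ψ (pairC ((N+1)/2)) (fun _ => 0)).depth + 1 ≤ Nat.clog 2 N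
        rw [affComp_depth, Nat.clog_of_two_le one_lt_two hN2,
          show (N + 2 - 1)/2 = (N+1)/2 from by omega]
        exact Nat.add_le_add_right hdep 1
      · intro y
        show (affComp ψ (pairC ((N+1)/2)) (fun _ => 0)).eval
          (fun j => sigAct 1 ((∑ k, pairW ((N+1)/2) N j k * y k) + pairB ((N+1)/2) N j)) = _
        rw [affComp_eval, hev, ← prod_pairs (M := (N+1)/2) (by omega) y]
        refine Finset.prod_congr rfl fun q _ => ?_
        have := pair_recover (M := (N+1)/2) (N := N) (by omega) y q
        simpa using this

/-! #### spline decomposition of `sFun` and the identity gadget -/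

lemma sFun_eq (z : ℝ) : sFun z =
    2 * sig2 z - 4 * sig2 (z - 1/2) + 2 * sig2 (z - 1)
      - 2 * sig2 (z - 5) + 4 * sig2 (z - 11/2) - 2 * sig2 (z - 6) := by
  unfold sFun
  split_ifs with h1 h2 h3 h4 h5 h6
  · rw [sig2_of_nonpos z (by linarith), sig2_of_nonpos (z - 1/2) (by linarith),
      sig2_of_nonpos (z - 1) (by linarith), sig2_of_nonpos (z - 5) (by linarith),
      sig2_of_nonpos (z - 11/2) (by linarith), sig2_of_nonpos (z - 6) (by linarith)]; ring
  · rw [sig2_of_nonneg z (by linarith), sig2_of_nonpos (z - 1/2) (by linarith),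
      sig2_of_nonpos (z - 1) (by linarith), sig2_of_nonpos (z - 5) (by linarith),
      sig2_of_nonpos (z - 11/2) (by linarith), sig2_of_nonpos (z - 6) (by linarith)]; ring
  · rw [sig2_of_nonneg z (by linarith), sig2_of_nonneg (z - 1/2) (by linarith),
      sig2_of_nonpos (z - 1) (by linarith), sig2_of_nonpos (z - 5) (by linarith),
      sig2_of_nonpos (z - 11/2) (by linarith), sig2_of_nonpos (z - 6) (by linarith)]; ring
  · rw [sig2_of_nonneg z (by linarith), sig2_of_nonneg (z - 1/2) (by linarith),
      sig2_of_nonneg (z - 1) (by linarith), sig2_of_nonpos (z - 5) (by linarith),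
      sig2_of_nonpos (z - 11/2) (by linarith), sig2_of_nonpos (z - 6) (by linarith)]; ring
  · rw [sig2_of_nonneg z (by linarith), sig2_of_nonneg (z - 1/2) (by linarith),
      sig2_of_nonneg (z - 1) (by linarith), sig2_of_nonneg (z - 5) (by linarith),
      sig2_of_nonpos (z - 11/2) (by linarith), sig2_of_nonpos (z - 6) (by linarith)]; ring
  · rw [sig2_of_nonneg z (by linarith), sig2_of_nonneg (z - 1/2) (by linarith),
      sig2_of_nonneg (z - 1) (by linarith), sig2_of_nonneg (z - 5) (by linarith),
      sig2_of_nonneg (z - 11/2) (by linarith), sig2_of_nonpos (z - 6) (by linarith)]; ring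
  · rw [sig2_of_nonneg z (by linarith), sig2_of_nonneg (z - 1/2) (by linarith),
      sig2_of_nonneg (z - 1) (by linarith), sig2_of_nonneg (z - 5) (by linarith),
      sig2_of_nonneg (z - 11/2) (by linarith), sig2_of_nonneg (z - 6) (by linarith)]; ring

def coefS : Fin 6 → ℝ := ![2, -4, 2, -2, 4, -2]
def tS : Fin 6 → ℝ := ![0, 1/2, 1, 5, 11/2, 6]

lemma sFun_six (z : ℝ) : (∑ r : Fin 6, coefS r * sig2 (z - tS r)) = sFun z := by
  rw [Fin.sum_univ_six, sFun_eq]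
  rw [show coefS 0 = 2 from rfl, show coefS 1 = -4 from rfl, show coefS 2 = 2 from rfl,
    show coefS 3 = -2 from rfl, show coefS 4 = 4 from rfl, show coefS 5 = -2 from rfl,
    show tS 0 = 0 from rfl, show tS 1 = 1/2 from rfl, show tS 2 = 1 from rfl,
    show tS 3 = 5 from rfl, show tS 4 = 11/2 from rfl, show tS 5 = 6 from rfl, sub_zero]
  ring

def coefI : Fin 4 → ℝ := ![1/4, 1/4, -1/4, -1/4]
def cifI : Fin 4 → ℝ := ![1, -1, 1, -1]
def difI : Fin 4 → ℝ := ![1, -1, -1, 1]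

lemma id_gadget (u : ℝ) : (∑ r : Fin 4, coefI r * sig2 (cifI r * u + difI r)) = u := by
  rw [Fin.sum_univ_four,
    show coefI 0 = 1/4 from rfl, show coefI 1 = 1/4 from rfl, show coefI 2 = -1/4 from rfl,
    show coefI 3 = -1/4 from rfl,
    show cifI 0 = 1 from rfl, show cifI 1 = -1 from rfl, show cifI 2 = 1 from rfl,
    show cifI 3 = -1 from rfl,
    show difI 0 = 1 from rfl, show difI 1 = -1 from rfl, show difI 2 = -1 from rfl,
    show difI 3 = 1 from rfl]
  rw [show (1:ℝ)*u + 1 = u+1 by ring, show (-1:ℝ)*u + -1 = -(u+1) by ring,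
    show (1:ℝ)*u + -1 = u-1 by ring, show (-1:ℝ)*u + 1 = -(u-1) by ring]
  have h1 := sig2_add_neg (u+1); have h2 := sig2_add_neg (u-1)
  linear_combination (1/4) * h1 - (1/4) * h2

/-! #### the first layer of the trunk network -/

lemma sum_block {P Q : ℕ} (k0 : Fin P) (co : Fin Q → ℝ) (g : Fin (P*Q) → ℝ) :
    (∑ j : Fin (P*Q),
        (if (finProdFinEquiv.symm j).1 = k0 then co (finProdFinEquiv.symm j).2 else 0) * g j)
      = ∑ r : Fin Q, co r * g (finProdFinEquiv (k0, r)) := by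
  rw [← Equiv.sum_comp finProdFinEquiv (fun j : Fin (P*Q) =>
      (if (finProdFinEquiv.symm j).1 = k0 then co (finProdFinEquiv.symm j).2 else 0) * g j)]
  simp only [Equiv.symm_apply_apply]
  rw [Fintype.sum_prod_type]
  rw [Finset.sum_eq_single k0]
  · simp
  · intro p _ hne; exact Finset.sum_eq_zero fun r _ => by simp [hne]
  · intro h; exact absurd (Finset.mem_univ _) h

def tW (d A K : ℕ) (idx : Fin A → Fin d) : Fin (d*6 + A*4) → Fin d → ℝ :=
  Fin.addCases
    (fun j k => if k = (finProdFinEquiv.symm j).1 then (4*K : ℝ) else 0)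
    (fun j k => if k = idx (finProdFinEquiv.symm j).1 then cifI (finProdFinEquiv.symm j).2 else 0)

def tB (d A K : ℕ) (mv : Fin d → ℕ) : Fin (d*6 + A*4) → ℝ :=
  Fin.addCases
    (fun j => (5 - 4*(mv (finProdFinEquiv.symm j).1 : ℝ)) - tS (finProdFinEquiv.symm j).2)
    (fun j => difI (finProdFinEquiv.symm j).2)

def tC (d A : ℕ) : Fin (d + A) → Fin (d*6 + A*4) → ℝ :=
  Fin.addCases
    (fun k0 => Fin.addCases
      (fun j => if (finProdFinEquiv.symm j).1 = k0 then coefS (finProdFinEquiv.symm j).2 else 0)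
      (fun _ => 0))
    (fun t => Fin.addCases
      (fun _ => 0)
      (fun j => if (finProdFinEquiv.symm j).1 = t then coefI (finProdFinEquiv.symm j).2 else 0))

lemma tW_sum_left (d A K : ℕ) (idx : Fin A → Fin d) (mv : Fin d → ℕ) (x : Fin d → ℝ)
    (j : Fin (d*6)) :
    (∑ i, tW d A K idx (Fin.castAdd (A*4) j) i * x i) + tB d A K mv (Fin.castAdd (A*4) j)
      = (4*(K:ℝ)*x (finProdFinEquiv.symm j).1 + (5 - 4*(mv (finProdFinEquiv.symm j).1 : ℝ)))
          - tS (finProdFinEquiv.symm j).2 := by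
  simp only [tW, tB, Fin.addCases_left]
  simp_rw [ite_mul, zero_mul]
  rw [Finset.sum_ite_eq' Finset.univ (finProdFinEquiv.symm j).1 (fun i => (4*(K:ℝ)) * x i)]
  simp only [Finset.mem_univ, if_true]
  ring

lemma tW_sum_right (d A K : ℕ) (idx : Fin A → Fin d) (mv : Fin d → ℕ) (x : Fin d → ℝ)
    (j : Fin (A*4)) :
    (∑ i, tW d A K idx (Fin.natAdd (d*6) j) i * x i) + tB d A K mv (Fin.natAdd (d*6) j)
      = cifI (finProdFinEquiv.symm j).2 * x (idx (finProdFinEquiv.symm j).1)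
          + difI (finProdFinEquiv.symm j).2 := by
  simp only [tW, tB, Fin.addCases_right]
  simp_rw [ite_mul, zero_mul]
  rw [Finset.sum_ite_eq' Finset.univ (idx (finProdFinEquiv.symm j).1)
    (fun i => cifI (finProdFinEquiv.symm j).2 * x i)]
  simp only [Finset.mem_univ, if_true]

lemma trunk_recover (d A K : ℕ) (mv : Fin d → ℕ) (idx : Fin A → Fin d) (x : Fin d → ℝ)
    (k : Fin (d + A)) :
    (∑ j : Fin (d*6 + A*4), tC d A k j
        * sigAct 1 ((∑ i, tW d A K idx j i * x i) + tB d A K mv j))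
      = Fin.append (fun j0 : Fin d => smOne K (mv j0) (x j0)) (fun t : Fin A => x (idx t)) k := by
  induction k using Fin.addCases with
  | left k0 =>
      rw [Fin.sum_univ_add, Fin.append_left]
      simp only [tC, Fin.addCases_left, Fin.addCases_right, zero_mul,
        Finset.sum_const_zero, add_zero]
      rw [sum_block k0 coefS]
      have hterm : ∀ r : Fin 6,
          coefS r * sigAct 1
            ((∑ i, tW d A K idx (Fin.castAdd (A*4) (finProdFinEquiv (k0, r))) i * x i)
              + tB d A K mv (Fin.castAdd (A*4) (finProdFinEquiv (k0, r))))
          = coefS r * sig2 ((4*(K:ℝ)*x k0 + (5 - 4*(mv k0 : ℝ))) - tS r) := by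
        intro r
        rw [tW_sum_left, sigAct_one]
        congr 2 <;> simp [Equiv.symm_apply_apply]
      rw [Finset.sum_congr rfl fun r _ => hterm r, sFun_six]
      rw [show 4*(K:ℝ)*x k0 + (5 - 4*(mv k0 : ℝ)) = 4*K*(x k0) + 5 - 4*(mv k0 : ℝ) from by ring]
      rfl
  | right t =>
      rw [Fin.sum_univ_add, Fin.append_right]
      simp only [tC, Fin.addCases_left, Fin.addCases_right, zero_mul,
        Finset.sum_const_zero, zero_add]
      rw [sum_block t coefI]
      have hterm : ∀ r : Fin 4,
          coefI r * sigAct 1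
            ((∑ i, tW d A K idx (Fin.natAdd (d*6) (finProdFinEquiv (t, r))) i * x i)
              + tB d A K mv (Fin.natAdd (d*6) (finProdFinEquiv (t, r))))
          = coefI r * sig2 (cifI r * x (idx t) + difI r) := by
        intro r
        rw [tW_sum_right, sigAct_one]
        congr 2 <;> simp [Equiv.symm_apply_apply]
      rw [Finset.sum_congr rfl fun r _ => hterm r, id_gadget]

/-- each trunk basis function `x ↦ x^α s_𝐦(x)` (with `|α| ≤ n-1`) is exactly
realized by a σ₂ neural network of depth `3 + log₂ d - 1 + log₂ n - 1` (logs rounded up)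
and width `4n - 4 + 6d`. -/
theorem trunk_basis_network
    (d n K : ℕ) (hd : 0 < d) (hn : 2 ≤ n) (hK : 0 < K)
    (mv : Fin d → ℕ) (hmv : ∀ j, 1 ≤ mv j ∧ mv j ≤ K)
    (α : Fin d → ℕ) (hα : ∑ i, α i ≤ n - 1) :
    ∃ φ : Net d, φ.widthLe (4 * n - 4 + 6 * d) ∧
      φ.depth ≤ 1 + Nat.clog 2 d + Nat.clog 2 n ∧
      ∀ x : Fin d → ℝ, φ.eval x = (∏ i, x i ^ α i) * smProd d K mv x := by
  classical
  set A := ∑ i, α i with hAdef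
  have hA1 : A ≤ n - 1 := hα
  have e : (Σ i : Fin d, Fin (α i)) ≃ Fin A :=
    Fintype.equivFinOfCardEq (by rw [hAdef]; simp)
  obtain ⟨ψ, hw, hdep, hev⟩ := prod_net (d + A) (by omega)
  have hc : Nat.clog 2 (d + A) ≤ Nat.clog 2 d + Nat.clog 2 n := by
    have hdn : d + A ≤ d * n := by
      have h2 : A ≤ d * (n-1) := le_trans hA1 (Nat.le_mul_of_pos_left (n-1) hd)
      have h3 : d * (n-1) + d = d * n := by
        have hn1 : n - 1 + 1 = n := by omega
        calc d*(n-1) + d = d*((n-1)+1) := by ring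
          _ = d*n := by rw [hn1]
      calc d + A ≤ d + d*(n-1) := Nat.add_le_add_left h2 d
        _ = d*(n-1) + d := Nat.add_comm _ _
        _ = d*n := h3
    refine le_trans (Nat.clog_mono_right 2 hdn) ?_
    rw [Nat.clog_le_iff_le_pow one_lt_two, pow_add]
    exact Nat.mul_le_mul (Nat.le_pow_clog one_lt_two d) (Nat.le_pow_clog one_lt_two n)
  refine ⟨Net.layer 1 (tW d A K (fun t => (e.symm t).1)) (tB d A K mv)
      (affComp ψ (tC d A) (fun _ => 0)),
    ⟨by omega, affComp_widthLe _ _ _ (widthLe_mono ψ hw (by omega))⟩, ?_, ?_⟩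
  · show (affComp ψ (tC d A) (fun _ => 0)).depth + 1 ≤ 1 + Nat.clog 2 d + Nat.clog 2 n
    rw [affComp_depth]
    omega
  · intro x
    show (affComp ψ (tC d A) (fun _ => 0)).eval
        (fun j => sigAct 1 ((∑ i, tW d A K (fun t => (e.symm t).1) j i * x i)
          + tB d A K mv j)) = _
    rw [affComp_eval, hev]
    have hrec : ∀ k : Fin (d + A),
        (∑ j, tC d A k j * sigAct 1 ((∑ i, tW d A K (fun t => (e.symm t).1) j i * x i)
            + tB d A K mv j)) + (fun _ => (0:ℝ)) k
          = Fin.append (fun j0 : Fin d => smOne K (mv j0) (x j0))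
              (fun t : Fin A => x ((e.symm t).1)) k := fun k => by
      simpa using trunk_recover d A K mv (fun t => (e.symm t).1) x k
    rw [Finset.prod_congr rfl fun k _ => hrec k, Fin.prod_univ_add]
    simp only [Fin.append_left, Fin.append_right]
    have hmono : (∏ t : Fin A, x ((e.symm t).1)) = ∏ i, x i ^ α i := by
      rw [← Fintype.prod_equiv e (fun p => x p.1) (fun t => x ((e.symm t).1))
        (fun p => by simp)]
      rw [← Finset.univ_sigma_univ, Finset.prod_sigma]
      simp
    rw [hmono]
    exact mul_comm _ _

end
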